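/- With Vᵢ = (2X + (2i−1)Δ, (X+(i−1)Δ)(X+iΔ)/s), the midpoint Mᵢ of VᵢV_{i+1} equals (2(X+iΔ), (X+iΔ)²/s), hence lies on the parabola y = x²/(4s) (with focus S = (0,s)); moreover the slope of VᵢV_{i+1} equals the slope of this parabola at Mᵢ, i.e., side VᵢV_{i+1} is tangent to the parabola y = x²/(4s) at Mᵢ. -/

import Mathlib

/-- With `Vᵢ = (2X+(2i-1)Δ, (X+(i-1)Δ)(X+iΔ)/s)`, the midpoint `Mᵢ` of
`VᵢVᵢ₊₁` equals `(2(X+iΔ), (X+iΔ)²/s)`, lies on the parabola `y = x²/(4s)` (with focus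
`S = (0,s)`), and the slope of `VᵢVᵢ₊₁` equals the slope of that parabola at `Mᵢ`;
i.e. the side `VᵢVᵢ₊₁` is tangent to `y = x²/(4s)` at `Mᵢ`. -/
theorem stmt_15 (s X Δ : ℝ) (hs : s ≠ 0) (hΔ : 0 < Δ) (V : ℕ → ℝ × ℝ)
    (hV : V = fun i : ℕ => (2 * X + (2 * (i : ℝ) - 1) * Δ,
      (X + ((i : ℝ) - 1) * Δ) * (X + (i : ℝ) * Δ) / s)) :
    ∀ i : ℕ,
      midpoint ℝ (V i) (V (i + 1)) = (2 * (X + (i : ℝ) * Δ), (X + (i : ℝ) * Δ) ^ 2 / s) ∧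
      (midpoint ℝ (V i) (V (i + 1))).2 = (midpoint ℝ (V i) (V (i + 1))).1 ^ 2 / (4 * s) ∧
      ((V (i + 1)).2 - (V i).2) / ((V (i + 1)).1 - (V i).1) =
        deriv (fun x : ℝ => x ^ 2 / (4 * s)) ((midpoint ℝ (V i) (V (i + 1))).1) := by
  intro i
  subst hV
  have hmid : midpoint ℝ
      ((fun i : ℕ => ((2 * X + (2 * (i : ℝ) - 1) * Δ,
        (X + ((i : ℝ) - 1) * Δ) * (X + (i : ℝ) * Δ) / s) : ℝ × ℝ)) i)
      ((fun i : ℕ => ((2 * X + (2 * (i : ℝ) - 1) * Δ,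
        (X + ((i : ℝ) - 1) * Δ) * (X + (i : ℝ) * Δ) / s) : ℝ × ℝ)) (i + 1))
      = (2 * (X + (i : ℝ) * Δ), (X + (i : ℝ) * Δ) ^ 2 / s) := by
    simp only [midpoint_eq_smul_add, Prod.smul_mk, Prod.mk_add_mk, smul_eq_mul, Nat.cast_add,
      Nat.cast_one]
    refine Prod.ext ?_ ?_ <;> simp <;> field_simp <;> ring
  refine ⟨hmid, ?_, ?_⟩
  · rw [hmid]; field_simp; ring
  · rw [hmid]
    simp only [deriv_div_const, deriv_pow_field, Nat.cast_add, Nat.cast_one, Nat.cast_ofNat]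
    have hΔ' : Δ ≠ 0 := ne_of_gt hΔ
    have h1 : 2 * X + (2 * ((i:ℝ) + 1) - 1) * Δ - (2 * X + (2 * (i:ℝ) - 1) * Δ) = 2 * Δ := by ring
    rw [h1, div_eq_div_iff (by positivity) (by positivity)]
    · field_simp
      ring
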